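/- Fix k₀ ∈ ℕ, c, C > 0, and γ ∈ (1/2, 1], with c ≥ 16 if γ = 1. Suppose {s_k} is a nonnegative real sequence satisfying s_{k+1} ≤ (1 − c k^{−γ}) s_k + C k^{−2γ} for all k ≥ k₀. Then there exists a constant C_ub depending only on c, C, γ, k₀ such that s_k ≤ C_ub · k^{−γ} for all k ≥ 1. -/

import Mathlib

open Filter Topology

private lemma rpow_succ_key (γ : ℝ) (hγ0 : 0 < γ) (hγ1 : γ ≤ 1) (x : ℝ) (hx : 1 ≤ x) :
    x ^ (-γ) - γ * x ^ (-γ - 1) ≤ (x + 1) ^ (-γ) := by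
  have hx0 : 0 < x := lt_of_lt_of_le one_pos hx
  have ht : (0:ℝ) ≤ 1/x := by positivity
  have hb : (1 + 1/x) ^ γ ≤ 1 + γ * (1/x) :=
    rpow_one_add_le_one_add_mul_self (by linarith) hγ0.le hγ1
  have hpos : (0:ℝ) < 1 + γ * (1/x) := by positivity
  have h1 : (1 - γ * (1/x)) * (1 + γ * (1/x)) ≤ 1 := by nlinarith [sq_nonneg (γ * (1/x))]
  have h2 : 1 - γ * (1/x) ≤ (1 + γ * (1/x))⁻¹ := by
    rw [inv_eq_one_div, le_div_iff₀ hpos]; linarith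
  have hbase : (0:ℝ) < 1 + 1/x := by positivity
  have h3 : (1 + 1/x) ^ (-γ) = ((1 + 1/x) ^ γ)⁻¹ := by
    rw [Real.rpow_neg hbase.le]
  have h4 : (1 + γ * (1/x))⁻¹ ≤ ((1 + 1/x) ^ γ)⁻¹ :=
    inv_anti₀ (Real.rpow_pos_of_pos hbase γ) hb
  have h5 : (x + 1) ^ (-γ) = x ^ (-γ) * (1 + 1/x) ^ (-γ) := by
    have hxx : x + 1 = x * (1 + 1/x) := by field_simp
    rw [hxx, Real.mul_rpow hx0.le hbase.le]
  have h6 : x ^ (-γ - 1) = x ^ (-γ) * x⁻¹ := by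
    rw [show -γ - 1 = -γ + (-1) by ring, Real.rpow_add hx0, Real.rpow_neg_one]
  have hxg : 0 ≤ x ^ (-γ) := Real.rpow_nonneg hx0.le _
  have step : 1 - γ * (1/x) ≤ (1 + 1/x) ^ (-γ) := by
    rw [h3]; exact h2.trans h4
  calc x ^ (-γ) - γ * x ^ (-γ - 1)
      = x ^ (-γ) * (1 - γ * (1/x)) := by rw [h6]; field_simp
    _ ≤ x ^ (-γ) * (1 + 1/x) ^ (-γ) := mul_le_mul_of_nonneg_left step hxg
    _ = (x + 1) ^ (-γ) := h5.symm

/-- Deterministic sequence lemma: if a nonnegative sequence satisfies the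
contraction recursion `s_{k+1} ≤ (1 − c k^{−γ}) s_k + C k^{−2γ}` for all `k ≥ k₀`, with
`γ ∈ (1/2, 1]` and `c ≥ 16` if `γ = 1`, then `s_k ≤ C_ub · k^{−γ}` for all `k ≥ 1` and some
constant `C_ub`. -/
theorem sequence_decay_of_contraction_recursion
    (k0 : ℕ) (c C γ : ℝ) (hc : 0 < c) (hC : 0 < C) (hγ : 1 / 2 < γ ∧ γ ≤ 1)
    (hc16 : γ = 1 → 16 ≤ c)
    (s : ℕ → ℝ) (hpos : ∀ k, 0 ≤ s k)
    (hrec : ∀ k, k0 ≤ k →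
      s (k + 1) ≤ (1 - c * (k : ℝ) ^ (-γ)) * s k + C * (k : ℝ) ^ (-(2 * γ))) :
    ∃ Cub : ℝ, ∀ k : ℕ, 1 ≤ k → s k ≤ Cub * (k : ℝ) ^ (-γ) := by
  obtain ⟨hγhalf, hγ1⟩ := hγ
  have hγ0 : 0 < γ := by linarith
  -- eventually `c * k^{-γ} ≤ 1`
  have hev1 : ∀ᶠ k : ℕ in atTop, c * (k : ℝ) ^ (-γ) ≤ 1 := by
    have h := (tendsto_rpow_neg_atTop hγ0).comp (tendsto_natCast_atTop_atTop (R := ℝ))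
    have h' : Filter.Tendsto (fun k : ℕ => c * (k : ℝ) ^ (-γ)) atTop (nhds (c * 0)) :=
      (h.const_mul c)
    rw [mul_zero] at h'
    exact h'.eventually_le_const one_pos
  -- eventually `γ * k^{γ-1} ≤ c/2`
  have hev2 : ∀ᶠ k : ℕ in atTop, γ * (k : ℝ) ^ (γ - 1) ≤ c / 2 := by
    rcases eq_or_lt_of_le hγ1 with hγeq | hγlt
    · have hc' : 16 ≤ c := hc16 hγeq
      filter_upwards [eventually_ge_atTop 1] with k hk
      have hk1 : (1:ℝ) ≤ (k:ℝ) := by exact_mod_cast hk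
      rw [hγeq, sub_self, Real.rpow_zero]
      linarith
    · have h : Filter.Tendsto (fun k : ℕ => γ * (k : ℝ) ^ (γ - 1)) atTop (nhds (γ * 0)) := by
        have h0 := (tendsto_rpow_neg_atTop (by linarith : 0 < 1 - γ)).comp
          (tendsto_natCast_atTop_atTop (R := ℝ))
        have h1 : Filter.Tendsto (fun k : ℕ => (k : ℝ) ^ (γ - 1)) atTop (nhds 0) := by
          simpa [show -(1 - γ) = γ - 1 by ring, Function.comp_def] using h0
        exact h1.const_mul γ
      rw [mul_zero] at h
      exact h.eventually_le_const (by positivity)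
  obtain ⟨N, hN⟩ := Filter.eventually_atTop.mp (hev1.and hev2)
  set K := max N (max k0 1) with hKdef
  have hKN : N ≤ K := le_max_left _ _
  have hKk0 : k0 ≤ K := le_trans (le_max_left _ _) (le_max_right _ _)
  have hK1 : 1 ≤ K := le_trans (le_max_right _ _) (le_max_right _ _)
  set A := max (2 * C / c) (s K * (K : ℝ) ^ γ) with hAdef
  have hA0 : 0 ≤ A := le_trans (by positivity) (le_max_left _ _)
  have hA2C : 2 * C / c ≤ A := le_max_left _ _
  -- main induction
  have main : ∀ n : ℕ, s (K + n) ≤ A * ((K + n : ℕ) : ℝ) ^ (-γ) := by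
    intro n
    induction n with
    | zero =>
      have hKpos : (0:ℝ) < (K:ℝ) := by exact_mod_cast hK1
      have : s K * (K : ℝ) ^ γ * (K : ℝ) ^ (-γ) = s K := by
        rw [mul_assoc, ← Real.rpow_add hKpos, add_neg_cancel, Real.rpow_zero, mul_one]
      calc s (K + 0) = s K * (K : ℝ) ^ γ * (K : ℝ) ^ (-γ) := by rw [this, Nat.add_zero]
        _ ≤ A * (K : ℝ) ^ (-γ) :=
            mul_le_mul_of_nonneg_right (le_max_right _ _) (Real.rpow_nonneg hKpos.le _)
        _ = A * ((K + 0 : ℕ) : ℝ) ^ (-γ) := by norm_num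
    | succ n ih =>
      set k := K + n with hkdef
      have hkK : K ≤ k := Nat.le_add_right _ _
      have hk1 : 1 ≤ k := le_trans hK1 hkK
      have hkR1 : (1:ℝ) ≤ (k:ℝ) := by exact_mod_cast hk1
      have hkpos : (0:ℝ) < (k:ℝ) := by linarith
      obtain ⟨hk_small, hk_gk⟩ := hN k (le_trans hKN hkK)
      have hrec' := hrec k (le_trans hKk0 hkK)
      have hcontr : 0 ≤ 1 - c * (k:ℝ) ^ (-γ) := by linarith
      have step1 : (1 - c * (k:ℝ) ^ (-γ)) * s k ≤ (1 - c * (k:ℝ) ^ (-γ)) * (A * (k:ℝ) ^ (-γ)) :=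
        mul_le_mul_of_nonneg_left ih hcontr
      have hsq : (k:ℝ) ^ (-γ) * (k:ℝ) ^ (-γ) = (k:ℝ) ^ (-(2*γ)) := by
        rw [← Real.rpow_add hkpos]; ring_nf
      have hsplit : (k:ℝ) ^ (-γ - 1) = (k:ℝ) ^ (γ - 1) * (k:ℝ) ^ (-(2*γ)) := by
        rw [← Real.rpow_add hkpos]; ring_nf
      have h2g : 0 ≤ (k:ℝ) ^ (-(2*γ)) := Real.rpow_nonneg hkpos.le _
      have hCle : C ≤ c / 2 * A := by
        have h' := (div_le_iff₀ hc).mp hA2C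
        nlinarith
      have hgk : γ * (k:ℝ) ^ (-γ - 1) ≤ c / 2 * (k:ℝ) ^ (-(2*γ)) := by
        rw [hsplit, ← mul_assoc]
        exact mul_le_mul_of_nonneg_right hk_gk h2g
      have hbern : (k:ℝ) ^ (-γ) - γ * (k:ℝ) ^ (-γ - 1) ≤ ((k:ℝ) + 1) ^ (-γ) :=
        rpow_succ_key γ hγ0 hγ1 _ hkR1
      have key : A * (k:ℝ) ^ (-γ) - c * A * (k:ℝ) ^ (-(2*γ)) + C * (k:ℝ) ^ (-(2*γ))
          ≤ A * ((k:ℝ) + 1) ^ (-γ) := by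
        have hA_bern : A * ((k:ℝ) ^ (-γ) - γ * (k:ℝ) ^ (-γ - 1)) ≤ A * ((k:ℝ) + 1) ^ (-γ) :=
          mul_le_mul_of_nonneg_left hbern hA0
        have h_gk' : A * (γ * (k:ℝ) ^ (-γ - 1)) ≤ A * (c / 2 * (k:ℝ) ^ (-(2*γ))) :=
          mul_le_mul_of_nonneg_left hgk hA0
        have h_C' : C * (k:ℝ) ^ (-(2*γ)) ≤ c / 2 * A * (k:ℝ) ^ (-(2*γ)) :=
          mul_le_mul_of_nonneg_right hCle h2g
        nlinarith
      have hcast : ((k + 1 : ℕ) : ℝ) = (k:ℝ) + 1 := by push_cast; ring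
      calc s (K + (n + 1)) = s (k + 1) := by rw [hkdef]; ring_nf
        _ ≤ (1 - c * (k:ℝ) ^ (-γ)) * s k + C * (k:ℝ) ^ (-(2*γ)) := hrec'
        _ ≤ (1 - c * (k:ℝ) ^ (-γ)) * (A * (k:ℝ) ^ (-γ)) + C * (k:ℝ) ^ (-(2*γ)) := by linarith
        _ = A * (k:ℝ) ^ (-γ) - c * A * (k:ℝ) ^ (-(2*γ)) + C * (k:ℝ) ^ (-(2*γ)) := by
            rw [← hsq]; ring
        _ ≤ A * ((k:ℝ) + 1) ^ (-γ) := key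
        _ = A * ((K + (n + 1) : ℕ) : ℝ) ^ (-γ) := by
            rw [show K + (n + 1) = k + 1 by rw [hkdef]; ring, hcast]
  -- final constant
  refine ⟨A + ∑ j ∈ Finset.range K, s j * (j : ℝ) ^ γ, fun k hk => ?_⟩
  have hsum0 : 0 ≤ ∑ j ∈ Finset.range K, s j * (j : ℝ) ^ γ :=
    Finset.sum_nonneg fun j _ => mul_nonneg (hpos j) (Real.rpow_nonneg (Nat.cast_nonneg j) γ)
  have hkpos : (0:ℝ) < (k:ℝ) := by exact_mod_cast hk
  have hkg : 0 ≤ (k:ℝ) ^ (-γ) := Real.rpow_nonneg hkpos.le _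
  rcases le_or_gt K k with hKk | hkK
  · obtain ⟨n, rfl⟩ := Nat.exists_eq_add_of_le hKk
    calc s (K + n) ≤ A * ((K + n : ℕ) : ℝ) ^ (-γ) := main n
      _ ≤ (A + ∑ j ∈ Finset.range K, s j * (j : ℝ) ^ γ) * ((K + n : ℕ) : ℝ) ^ (-γ) := by
          apply mul_le_mul_of_nonneg_right (by linarith) (Real.rpow_nonneg (by positivity) _)
  · have hmem : k ∈ Finset.range K := Finset.mem_range.mpr hkK
    have hsingle : s k * (k : ℝ) ^ γ ≤ ∑ j ∈ Finset.range K, s j * (j : ℝ) ^ γ :=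
      Finset.single_le_sum
        (fun j _ => mul_nonneg (hpos j) (Real.rpow_nonneg (Nat.cast_nonneg j) γ)) hmem
    have hid : s k = s k * (k : ℝ) ^ γ * (k : ℝ) ^ (-γ) := by
      rw [mul_assoc, ← Real.rpow_add hkpos, add_neg_cancel, Real.rpow_zero, mul_one]
    rw [hid]
    apply mul_le_mul_of_nonneg_right _ hkg
    linarith
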